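/- The map h_t is Lipschitz continuous with Lipschitz constant L_k = (k+5)λ₁ on the set of nonzero vectors: for all nonzero v₁, v₂ ∈ ℝ^d, ‖h_t(v₁) − h_t(v₂)‖ ≤ (k+5)λ₁ ‖v₁ − v₂‖. -/

import Mathlib

set_option autoImplicit false

open scoped RealInnerProductSpace

/-- `matVec A v` is the matrix-vector product `A v`, viewed as a map on Euclidean space. -/
noncomputable def matVec {n : ℕ} (A : Matrix (Fin n) (Fin n) ℝ)
    (v : EuclideanSpace ℝ (Fin n)) : EuclideanSpace ℝ (Fin n) :=
  WithLp.toLp 2 (A.mulVec v)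

lemma matVec_sub' {n : ℕ} (A : Matrix (Fin n) (Fin n) ℝ) (u v : EuclideanSpace ℝ (Fin n)) :
    matVec A (u - v) = matVec A u - matVec A v := by
  unfold matVec
  rw [WithLp.ofLp_sub, Matrix.mulVec_sub, WithLp.toLp_sub]

lemma matVec_smul' {n : ℕ} (A : Matrix (Fin n) (Fin n) ℝ) (c : ℝ) (v : EuclideanSpace ℝ (Fin n)) :
    matVec A (c • v) = c • matVec A v := by
  unfold matVec
  rw [WithLp.ofLp_smul, Matrix.mulVec_smul, WithLp.toLp_smul]

/-- Lipschitz bound for normalization. -/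
lemma normalize_lip {n : ℕ} (v₁ v₂ : EuclideanSpace ℝ (Fin n)) (hv₁ : v₁ ≠ 0) (hv₂ : v₂ ≠ 0) :
    ‖(‖v₁‖⁻¹ • v₁) - (‖v₂‖⁻¹ • v₂)‖ * ‖v₂‖ ≤ 2 * ‖v₁ - v₂‖ := by
  have h1 : (0:ℝ) < ‖v₁‖ := norm_pos_iff.mpr hv₁
  have h2 : (0:ℝ) < ‖v₂‖ := norm_pos_iff.mpr hv₂
  have hdec : (‖v₁‖⁻¹ • v₁) - (‖v₂‖⁻¹ • v₂)
      = ‖v₂‖⁻¹ • (v₁ - v₂) + (‖v₁‖⁻¹ - ‖v₂‖⁻¹) • v₁ := by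
    rw [smul_sub, sub_smul]; abel
  have hbound : ‖(‖v₁‖⁻¹ • v₁) - (‖v₂‖⁻¹ • v₂)‖
      ≤ ‖v₂‖⁻¹ * ‖v₁ - v₂‖ + |‖v₁‖⁻¹ - ‖v₂‖⁻¹| * ‖v₁‖ := by
    rw [hdec]
    calc ‖‖v₂‖⁻¹ • (v₁ - v₂) + (‖v₁‖⁻¹ - ‖v₂‖⁻¹) • v₁‖
        ≤ ‖‖v₂‖⁻¹ • (v₁ - v₂)‖ + ‖(‖v₁‖⁻¹ - ‖v₂‖⁻¹) • v₁‖ := norm_add_le _ _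
      _ = ‖v₂‖⁻¹ * ‖v₁ - v₂‖ + |‖v₁‖⁻¹ - ‖v₂‖⁻¹| * ‖v₁‖ := by
          rw [norm_smul, norm_smul, Real.norm_eq_abs, Real.norm_eq_abs,
            abs_of_pos (inv_pos.mpr h2)]
  have hinv : |‖v₁‖⁻¹ - ‖v₂‖⁻¹| * ‖v₁‖ ≤ ‖v₁ - v₂‖ / ‖v₂‖ := by
    have : ‖v₁‖⁻¹ - ‖v₂‖⁻¹ = (‖v₂‖ - ‖v₁‖) / (‖v₁‖ * ‖v₂‖) := by
      field_simp
    rw [this, abs_div, abs_of_pos (mul_pos h1 h2)]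
    rw [div_mul_eq_mul_div, div_le_div_iff₀ (mul_pos h1 h2) h2]
    have habs : |‖v₂‖ - ‖v₁‖| ≤ ‖v₁ - v₂‖ := by
      rw [abs_sub_comm]
      exact (abs_norm_sub_norm_le v₁ v₂).trans_eq (by rw [])
    calc |‖v₂‖ - ‖v₁‖| * ‖v₁‖ * ‖v₂‖ ≤ ‖v₁ - v₂‖ * ‖v₁‖ * ‖v₂‖ := by
          apply mul_le_mul_of_nonneg_right (mul_le_mul_of_nonneg_right habs h1.le) h2.le
      _ = ‖v₁ - v₂‖ * (‖v₁‖ * ‖v₂‖) := by ring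
  calc ‖(‖v₁‖⁻¹ • v₁) - (‖v₂‖⁻¹ • v₂)‖ * ‖v₂‖
      ≤ (‖v₂‖⁻¹ * ‖v₁ - v₂‖ + ‖v₁ - v₂‖ / ‖v₂‖) * ‖v₂‖ := by
        apply mul_le_mul_of_nonneg_right _ h2.le
        exact hbound.trans (by linarith)
    _ = 2 * ‖v₁ - v₂‖ := by field_simp; ring

/-- the deflated Krasulina pseudo-gradient map
`h_t(v) = Cv - (vᵀCv/‖v‖²)v - Σ_{p=1}^{k-1} (x_p x_pᵀ/‖x_p‖²) C v`
is Lipschitz with constant `(k+5)λ₁` on nonzero vectors, where `‖C‖ ≤ λ₁` is the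
spectral-norm bound on the symmetric PSD matrix `C` and `x_1, …, x_{k-1}` are
nonzero vectors. -/
theorem deflated_krasulina_pseudograd_lipschitz
    {d : ℕ}
    (C : Matrix (Fin d) (Fin d) ℝ) (hCsymm : C.IsSymm) (hCpsd : C.PosSemidef)
    (lam1 : ℝ) (hlam1 : 0 < lam1)
    (hCnorm : ∀ v : EuclideanSpace ℝ (Fin d), ‖matVec C v‖ ≤ lam1 * ‖v‖)
    (k : ℕ) (hk : 1 ≤ k)
    (xs : Fin (k - 1) → EuclideanSpace ℝ (Fin d)) (hxs : ∀ p, xs p ≠ 0)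
    (v₁ v₂ : EuclideanSpace ℝ (Fin d)) (hv₁ : v₁ ≠ 0) (hv₂ : v₂ ≠ 0) :
    ‖(matVec C v₁ - (⟪v₁, matVec C v₁⟫ / ‖v₁‖ ^ 2) • v₁ -
          ∑ p, (⟪xs p, matVec C v₁⟫ / ‖xs p‖ ^ 2) • xs p) -
        (matVec C v₂ - (⟪v₂, matVec C v₂⟫ / ‖v₂‖ ^ 2) • v₂ -
          ∑ p, (⟪xs p, matVec C v₂⟫ / ‖xs p‖ ^ 2) • xs p)‖ ≤
      ((k : ℝ) + 5) * lam1 * ‖v₁ - v₂‖ := by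
  have h1 : (0:ℝ) < ‖v₁‖ := norm_pos_iff.mpr hv₁
  have h2 : (0:ℝ) < ‖v₂‖ := norm_pos_iff.mpr hv₂
  set w := v₁ - v₂ with hw
  have hwn : (0:ℝ) ≤ ‖w‖ := norm_nonneg _
  set r₁ : ℝ := ⟪v₁, matVec C v₁⟫ / ‖v₁‖ ^ 2 with hr₁def
  set r₂ : ℝ := ⟪v₂, matVec C v₂⟫ / ‖v₂‖ ^ 2 with hr₂def
  -- bound on the C part
  have hA : ‖matVec C v₁ - matVec C v₂‖ ≤ lam1 * ‖w‖ := by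
    rw [← matVec_sub']; exact hCnorm w
  -- Rayleigh quotient bound
  have hray : ∀ v : EuclideanSpace ℝ (Fin d), v ≠ 0 →
      |⟪v, matVec C v⟫ / ‖v‖ ^ 2| ≤ lam1 := by
    intro v hv
    have hvp : (0:ℝ) < ‖v‖ := norm_pos_iff.mpr hv
    rw [abs_div, abs_of_pos (by positivity : (0:ℝ) < ‖v‖ ^ 2), div_le_iff₀ (by positivity)]
    calc |⟪v, matVec C v⟫| ≤ ‖v‖ * ‖matVec C v‖ := abs_real_inner_le_norm v _
      _ ≤ ‖v‖ * (lam1 * ‖v‖) := by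
          exact mul_le_mul_of_nonneg_left (hCnorm v) hvp.le
      _ = lam1 * ‖v‖ ^ 2 := by ring
  -- normalized vectors
  set u₁ : EuclideanSpace ℝ (Fin d) := ‖v₁‖⁻¹ • v₁ with hu₁
  set u₂ : EuclideanSpace ℝ (Fin d) := ‖v₂‖⁻¹ • v₂ with hu₂
  have hnu₁ : ‖u₁‖ = 1 := norm_smul_inv_norm hv₁
  have hnu₂ : ‖u₂‖ = 1 := norm_smul_inv_norm hv₂
  have hrq : ∀ (v : EuclideanSpace ℝ (Fin d)), v ≠ 0 →
      ⟪‖v‖⁻¹ • v, matVec C (‖v‖⁻¹ • v)⟫ = ⟪v, matVec C v⟫ / ‖v‖ ^ 2 := by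
    intro v hv
    have hvp : (0:ℝ) < ‖v‖ := norm_pos_iff.mpr hv
    rw [matVec_smul', real_inner_smul_left, real_inner_smul_right]
    have hne : (‖v‖:ℝ) ≠ 0 := hvp.ne'
    generalize (⟪v, matVec C v⟫ : ℝ) = I
    rw [div_eq_mul_inv, sq, mul_inv]
    ring
  have hr₁' : r₁ = ⟪u₁, matVec C u₁⟫ := by rw [hr₁def, hu₁, hrq v₁ hv₁]
  have hr₂' : r₂ = ⟪u₂, matVec C u₂⟫ := by rw [hr₂def, hu₂, hrq v₂ hv₂]
  have hdiff : r₁ - r₂ = ⟪u₁ - u₂, matVec C u₁⟫ + ⟪u₂, matVec C (u₁ - u₂)⟫ := by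
    rw [hr₁', hr₂', inner_sub_left, matVec_sub', inner_sub_right]
    ring
  have hrdiff : |r₁ - r₂| ≤ 2 * lam1 * ‖u₁ - u₂‖ := by
    rw [hdiff]
    calc |⟪u₁ - u₂, matVec C u₁⟫ + ⟪u₂, matVec C (u₁ - u₂)⟫|
        ≤ |⟪u₁ - u₂, matVec C u₁⟫| + |⟪u₂, matVec C (u₁ - u₂)⟫| := abs_add_le _ _
      _ ≤ ‖u₁ - u₂‖ * ‖matVec C u₁‖ + ‖u₂‖ * ‖matVec C (u₁ - u₂)‖ := by
          exact add_le_add (abs_real_inner_le_norm _ _) (abs_real_inner_le_norm _ _)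
      _ ≤ ‖u₁ - u₂‖ * (lam1 * ‖u₁‖) + ‖u₂‖ * (lam1 * ‖u₁ - u₂‖) := by
          exact add_le_add (mul_le_mul_of_nonneg_left (hCnorm u₁) (norm_nonneg _))
            (mul_le_mul_of_nonneg_left (hCnorm _) (norm_nonneg _))
      _ = 2 * lam1 * ‖u₁ - u₂‖ := by rw [hnu₁, hnu₂]; ring
  have hulip : ‖u₁ - u₂‖ * ‖v₂‖ ≤ 2 * ‖w‖ := normalize_lip v₁ v₂ hv₁ hv₂
  have hrv₂ : |r₁ - r₂| * ‖v₂‖ ≤ 4 * lam1 * ‖w‖ := by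
    calc |r₁ - r₂| * ‖v₂‖ ≤ (2 * lam1 * ‖u₁ - u₂‖) * ‖v₂‖ :=
          mul_le_mul_of_nonneg_right hrdiff h2.le
      _ = 2 * lam1 * (‖u₁ - u₂‖ * ‖v₂‖) := by ring
      _ ≤ 2 * lam1 * (2 * ‖w‖) := by
          exact mul_le_mul_of_nonneg_left hulip (by positivity)
      _ = 4 * lam1 * ‖w‖ := by ring
  -- Rayleigh term bound
  have hB : ‖r₁ • v₁ - r₂ • v₂‖ ≤ 5 * lam1 * ‖w‖ := by
    have hdec : r₁ • v₁ - r₂ • v₂ = r₁ • w + (r₁ - r₂) • v₂ := by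
      rw [smul_sub, sub_smul]; abel
    rw [hdec]
    calc ‖r₁ • w + (r₁ - r₂) • v₂‖ ≤ ‖r₁ • w‖ + ‖(r₁ - r₂) • v₂‖ := norm_add_le _ _
      _ = |r₁| * ‖w‖ + |r₁ - r₂| * ‖v₂‖ := by
          rw [norm_smul, norm_smul, Real.norm_eq_abs, Real.norm_eq_abs]
      _ ≤ lam1 * ‖w‖ + 4 * lam1 * ‖w‖ := by
          exact add_le_add (mul_le_mul_of_nonneg_right (hray v₁ hv₁) hwn) hrv₂
      _ = 5 * lam1 * ‖w‖ := by ring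
  -- sum bound
  have hS : ‖∑ p, ((⟪xs p, matVec C v₁⟫ / ‖xs p‖ ^ 2) • xs p
        - (⟪xs p, matVec C v₂⟫ / ‖xs p‖ ^ 2) • xs p)‖ ≤ ((k:ℝ) - 1) * (lam1 * ‖w‖) := by
    calc ‖∑ p, ((⟪xs p, matVec C v₁⟫ / ‖xs p‖ ^ 2) • xs p
          - (⟪xs p, matVec C v₂⟫ / ‖xs p‖ ^ 2) • xs p)‖
        ≤ ∑ p, ‖(⟪xs p, matVec C v₁⟫ / ‖xs p‖ ^ 2) • xs p
          - (⟪xs p, matVec C v₂⟫ / ‖xs p‖ ^ 2) • xs p‖ := norm_sum_le _ _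
      _ ≤ ∑ _p : Fin (k - 1), lam1 * ‖w‖ := by
          apply Finset.sum_le_sum
          intro p _
          have hxp : (0:ℝ) < ‖xs p‖ := norm_pos_iff.mpr (hxs p)
          have : (⟪xs p, matVec C v₁⟫ / ‖xs p‖ ^ 2) • xs p
              - (⟪xs p, matVec C v₂⟫ / ‖xs p‖ ^ 2) • xs p
              = (⟪xs p, matVec C w⟫ / ‖xs p‖ ^ 2) • xs p := by
            rw [← sub_smul, matVec_sub', inner_sub_right, ← sub_div]
          rw [this, norm_smul, Real.norm_eq_abs, abs_div,
            abs_of_pos (by positivity : (0:ℝ) < ‖xs p‖ ^ 2)]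
          calc |⟪xs p, matVec C w⟫| / ‖xs p‖ ^ 2 * ‖xs p‖
              ≤ ‖xs p‖ * ‖matVec C w‖ / ‖xs p‖ ^ 2 * ‖xs p‖ := by
                apply mul_le_mul_of_nonneg_right _ (norm_nonneg _)
                exact div_le_div_of_nonneg_right (abs_real_inner_le_norm _ _) (by positivity)
            _ = ‖matVec C w‖ := by field_simp
            _ ≤ lam1 * ‖w‖ := hCnorm w
      _ = ((k:ℝ) - 1) * (lam1 * ‖w‖) := by
          rw [Finset.sum_const, Finset.card_univ, Fintype.card_fin, nsmul_eq_mul]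
          congr 1
          rw [Nat.cast_sub hk, Nat.cast_one]
  -- assemble
  have hsplit : (matVec C v₁ - r₁ • v₁ - ∑ p, (⟪xs p, matVec C v₁⟫ / ‖xs p‖ ^ 2) • xs p) -
        (matVec C v₂ - r₂ • v₂ - ∑ p, (⟪xs p, matVec C v₂⟫ / ‖xs p‖ ^ 2) • xs p)
      = (matVec C v₁ - matVec C v₂) - (r₁ • v₁ - r₂ • v₂)
        - ∑ p, ((⟪xs p, matVec C v₁⟫ / ‖xs p‖ ^ 2) • xs p
          - (⟪xs p, matVec C v₂⟫ / ‖xs p‖ ^ 2) • xs p) := by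
    rw [Finset.sum_sub_distrib]; abel
  rw [hsplit]
  calc ‖(matVec C v₁ - matVec C v₂) - (r₁ • v₁ - r₂ • v₂)
        - ∑ p, ((⟪xs p, matVec C v₁⟫ / ‖xs p‖ ^ 2) • xs p
          - (⟪xs p, matVec C v₂⟫ / ‖xs p‖ ^ 2) • xs p)‖
      ≤ ‖(matVec C v₁ - matVec C v₂) - (r₁ • v₁ - r₂ • v₂)‖
        + ‖∑ p, ((⟪xs p, matVec C v₁⟫ / ‖xs p‖ ^ 2) • xs p
          - (⟪xs p, matVec C v₂⟫ / ‖xs p‖ ^ 2) • xs p)‖ := norm_sub_le _ _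
    _ ≤ (‖matVec C v₁ - matVec C v₂‖ + ‖r₁ • v₁ - r₂ • v₂‖)
        + ((k:ℝ) - 1) * (lam1 * ‖w‖) := add_le_add (norm_sub_le _ _) hS
    _ ≤ (lam1 * ‖w‖ + 5 * lam1 * ‖w‖) + ((k:ℝ) - 1) * (lam1 * ‖w‖) := by
        have hk1 : (1:ℝ) ≤ (k:ℝ) := by exact_mod_cast hk
        apply add_le_add (add_le_add hA hB) le_rfl
    _ = ((k:ℝ) + 5) * lam1 * ‖w‖ := by ring
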